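/- Let X₁, X₂ be independent random variables uniformly distributed on the unit circle in ℂ and let a₁, a₂ be nonzero complex numbers. Then a₁X₁ + a₂X₂ has an absolutely continuous law on ℝ² ≅ ℂ. -/

import Mathlib

open MeasureTheory ProbabilityTheory
open scoped ENNReal Real

section Aux

open Complex Set

/-- The preimage in `ℂ` of a countable set under `z ↦ z.im - z.re` is Lebesgue-null. -/
lemma countable_diag_null {S : Set ℝ} (hS : S.Countable) :
    volume {z : ℂ | z.im - z.re ∈ S} = 0 := by
  have hSm : MeasurableSet S := hS.measurableSet
  set Z' : Set (ℝ × ℝ) := {p | p.2 - p.1 ∈ S} with hZ'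
  have hZ'm : MeasurableSet Z' := (measurable_snd.sub measurable_fst) hSm
  have h1 : {z : ℂ | z.im - z.re ∈ S} = Complex.measurableEquivRealProd ⁻¹' Z' := rfl
  rw [h1, Complex.volume_preserving_equiv_real_prod.measure_preimage hZ'm.nullMeasurableSet,
    Measure.volume_eq_prod, Measure.prod_apply hZ'm]
  have : ∀ x : ℝ, volume (Prod.mk x ⁻¹' Z') = 0 := by
    intro x
    refine measure_mono_null ?_ ((hS.image (fun s => s + x)).measure_zero volume)
    intro y hy
    exact ⟨y - x, hy, by ring⟩
  simp [this]

/-- The (real) Fréchet derivative of `z ↦ a₁ exp(i z.re) + a₂ exp(i z.im)`. -/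
noncomputable def Fd (a₁ a₂ : ℂ) (z : ℂ) : ℂ →L[ℝ] ℂ :=
  Complex.reCLM.smulRight (a₁ * Complex.I * Complex.exp (z.re * Complex.I)) +
  Complex.imCLM.smulRight (a₂ * Complex.I * Complex.exp (z.im * Complex.I))

lemma hasStrictFDerivAt_Fd (a₁ a₂ : ℂ) (z : ℂ) :
    HasStrictFDerivAt (fun z : ℂ => a₁ * Complex.exp (z.re * Complex.I)
      + a₂ * Complex.exp (z.im * Complex.I)) (Fd a₁ a₂ z) z := by
  have hre : HasStrictFDerivAt (fun z : ℂ => (z.re : ℂ) * Complex.I)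
      (Complex.reCLM.smulRight Complex.I) z := by
    have := (Complex.reCLM.smulRight Complex.I).hasStrictFDerivAt (x := z)
    convert this using 2 with w
    simp
  have him : HasStrictFDerivAt (fun z : ℂ => (z.im : ℂ) * Complex.I)
      (Complex.imCLM.smulRight Complex.I) z := by
    have := (Complex.imCLM.smulRight Complex.I).hasStrictFDerivAt (x := z)
    convert this using 2 with w
    simp
  have hexp1 : HasStrictFDerivAt Complex.exp
      ((1 : ℂ →L[ℂ] ℂ).smulRight (Complex.exp ((z.re : ℂ) * Complex.I)))
      ((z.re : ℂ) * Complex.I) :=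
    (Complex.hasStrictDerivAt_exp _).hasStrictFDerivAt
  have hexp2 : HasStrictFDerivAt Complex.exp
      ((1 : ℂ →L[ℂ] ℂ).smulRight (Complex.exp ((z.im : ℂ) * Complex.I)))
      ((z.im : ℂ) * Complex.I) :=
    (Complex.hasStrictDerivAt_exp _).hasStrictFDerivAt
  have h1 := ((hexp1.restrictScalars ℝ).comp z hre).const_mul a₁
  have h2 := ((hexp2.restrictScalars ℝ).comp z him).const_mul a₂
  have := h1.add h2
  convert this using 1
  · rfl
  · rfl
  · rfl
  ext h
  simp [Fd]
  ring

lemma det_Fd (a₁ a₂ : ℂ) (z : ℂ) :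
    (Fd a₁ a₂ z).det
      = ‖(starRingEnd ℂ) a₁ * a₂‖ *
        Real.sin (((starRingEnd ℂ) a₁ * a₂).arg + (z.im - z.re)) := by
  have h1 : (Fd a₁ a₂ z).det
      = ((starRingEnd ℂ) (a₁ * Complex.I * Complex.exp (z.re * Complex.I))
          * (a₂ * Complex.I * Complex.exp (z.im * Complex.I))).im := by
    rw [ContinuousLinearMap.det, ← LinearMap.det_toMatrix Complex.basisOneI,
      Matrix.det_fin_two]
    simp [LinearMap.toMatrix_apply, Complex.coe_basisOneI, Fd, Complex.coe_basisOneI_repr,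
      Complex.mul_im, Complex.mul_re]
    ring
  rw [h1]
  have h2 : (starRingEnd ℂ) (a₁ * Complex.I * Complex.exp (z.re * Complex.I))
          * (a₂ * Complex.I * Complex.exp (z.im * Complex.I))
      = ((starRingEnd ℂ) a₁ * a₂) * Complex.exp ((↑(z.im - z.re)) * Complex.I) := by
    simp only [map_mul, ← Complex.exp_conj, Complex.conj_I, Complex.conj_ofReal]
    have he : Complex.exp (↑z.re * -Complex.I) * Complex.exp (↑z.im * Complex.I)
        = Complex.exp ((↑(z.im - z.re)) * Complex.I) := by
      rw [← Complex.exp_add]; push_cast; ring_nf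
    have hI : (-Complex.I) * Complex.I = 1 := by
      rw [neg_mul, Complex.I_mul_I, neg_neg]
    calc (starRingEnd ℂ) a₁ * -Complex.I * Complex.exp (↑z.re * -Complex.I)
          * (a₂ * Complex.I * Complex.exp (↑z.im * Complex.I))
        = ((starRingEnd ℂ) a₁ * a₂) * ((-Complex.I) * Complex.I)
            * (Complex.exp (↑z.re * -Complex.I) * Complex.exp (↑z.im * Complex.I)) := by ring
      _ = (starRingEnd ℂ) a₁ * a₂ * Complex.exp ((↑(z.im - z.re)) * Complex.I) := by
          rw [hI, he]; ring
  rw [h2]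
  set w := (starRingEnd ℂ) a₁ * a₂ with hw
  conv_lhs => rw [← Complex.norm_mul_exp_arg_mul_I w]
  rw [mul_assoc, ← Complex.exp_add, ← add_mul, ← Complex.ofReal_add]
  simp only [Complex.mul_im, Complex.ofReal_re, Complex.ofReal_im, zero_mul, add_zero]
  rw [Complex.exp_ofReal_mul_I_im]

/-- A strictly differentiable self-map of `ℂ` whose Jacobian determinant vanishes only on a
null set pushes Lebesgue measure to an absolutely continuous measure. -/
lemma map_volume_ac
    (f : ℂ → ℂ) (f' : ℂ → ℂ →L[ℝ] ℂ)
    (hf : ∀ z, HasStrictFDerivAt f (f' z) z)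
    (hdet : Measurable fun z => (f' z).det)
    (hZ : volume {z : ℂ | (f' z).det = 0} = 0) :
    Measure.map f volume ≪ (volume : Measure ℂ) := by
  have hfm : Measurable f :=
    (Differentiable.continuous fun z => ((hf z).hasFDerivAt).differentiableAt).measurable
  have hUm : MeasurableSet {z : ℂ | (f' z).det ≠ 0} :=
    (hdet (measurableSet_singleton 0)).compl
  -- local injectivity neighborhoods, via the inverse function theorem
  have key : ∀ x : ℂ, (f' x).det ≠ 0 → ∃ u : Set ℂ, IsOpen u ∧ x ∈ u ∧ Set.InjOn f u := by
    intro x hx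
    have hx' : LinearMap.det (↑(f' x) : ℂ →ₗ[ℝ] ℂ) ≠ 0 := hx
    let e : ℂ ≃L[ℝ] ℂ :=
      (LinearMap.equivOfDetNeZero (↑(f' x) : ℂ →ₗ[ℝ] ℂ) hx').toContinuousLinearEquiv
    have hce : (e : ℂ →L[ℝ] ℂ) = f' x := by
      ext h
      show (LinearMap.equivOfDetNeZero (↑(f' x) : ℂ →ₗ[ℝ] ℂ) hx') h = f' x h
      rw [LinearEquiv.ofIsUnitDet_apply]
      rfl
    have hfx : HasStrictFDerivAt f (e : ℂ →L[ℝ] ℂ) x := by rw [hce]; exact hf x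
    refine ⟨(hfx.toOpenPartialHomeomorph f).source, (hfx.toOpenPartialHomeomorph f).open_source,
      hfx.mem_toOpenPartialHomeomorph_source, ?_⟩
    have := (hfx.toOpenPartialHomeomorph f).injOn
    rwa [hfx.toOpenPartialHomeomorph_coe] at this
  choose! u huo hxu huinj using key
  refine Measure.AbsolutelyContinuous.mk fun A hA hA0 => ?_
  rw [Measure.map_apply hfm hA]
  -- each localized piece is null, by the change of variables inequality
  have main : ∀ v : Set ℂ, IsOpen v → Set.InjOn f v →
      volume (f ⁻¹' A ∩ v ∩ {z : ℂ | (f' z).det ≠ 0}) = 0 := by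
    intro v hvo hvinj
    set t := f ⁻¹' A ∩ v ∩ {z : ℂ | (f' z).det ≠ 0} with ht
    have htm : MeasurableSet t := ((hfm hA).inter hvo.measurableSet).inter hUm
    have hfd : ∀ y ∈ t, HasFDerivWithinAt f (f' y) t y :=
      fun y _ => ((hf y).hasFDerivAt).hasFDerivWithinAt
    have hinj : Set.InjOn f t := hvinj.mono fun y hy => hy.1.2
    have him : volume (f '' t) = 0 :=
      measure_mono_null (by intro y ⟨x, hx, hxy⟩; exact hxy ▸ hx.1.1) hA0
    have hle := lintegral_abs_det_fderiv_le_addHaar_image volume htm hfd hinj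
    rw [him, le_zero_iff] at hle
    have hmi : Measurable fun x => ENNReal.ofReal |(f' x).det| :=
      (hdet.abs).ennreal_ofReal
    rw [lintegral_eq_zero_iff hmi] at hle
    have h0 : volume.restrict t {x | ENNReal.ofReal |(f' x).det| ≠ 0} = 0 := by
      simpa [Filter.EventuallyEq, ae_iff] using hle
    have hsub : t ⊆ {x | ENNReal.ofReal |(f' x).det| ≠ 0} := by
      intro x hx
      simp only [mem_setOf_eq, ne_eq, ENNReal.ofReal_eq_zero, not_le]
      exact abs_pos.2 hx.2
    refine le_antisymm ?_ (zero_le)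
    calc volume t = volume.restrict t t := (Measure.restrict_apply_self _ _).symm
      _ ≤ volume.restrict t {x | ENNReal.ofReal |(f' x).det| ≠ 0} := measure_mono hsub
      _ = 0 := h0
  -- countable subcover of the set where the determinant does not vanish
  obtain ⟨T, hTc, hTeq⟩ := TopologicalSpace.isOpen_iUnion_countable
    (fun x : {z : ℂ | (f' z).det ≠ 0} => u x) (fun x => huo x x.2)
  have hcover : f ⁻¹' A ⊆ {z : ℂ | (f' z).det = 0} ∪
      ⋃ x ∈ T, (f ⁻¹' A ∩ u x ∩ {z : ℂ | (f' z).det ≠ 0}) := by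
    intro z hz
    by_cases hd : (f' z).det = 0
    · exact Or.inl hd
    · right
      have : z ∈ ⋃ x ∈ T, u (x : ℂ) := by
        rw [hTeq]
        exact mem_iUnion.2 ⟨⟨z, hd⟩, hxu z hd⟩
      obtain ⟨x, hxT, hzu⟩ := mem_iUnion₂.1 this
      exact mem_iUnion₂.2 ⟨x, hxT, ⟨hz, hzu⟩, hd⟩
  refine measure_mono_null hcover ?_
  refine measure_union_null hZ ?_
  exact (measure_biUnion_null_iff hTc).2 fun x hx => main (u x) (huo x x.2) (huinj x x.2)

end Aux

/-- The uniform probability measure on the unit circle in `ℂ`. -/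
noncomputable def circleUniform : Measure ℂ :=
  Measure.map (fun θ : ℝ => Complex.exp (θ * Complex.I))
    ((ENNReal.ofReal (2 * π))⁻¹ • volume.restrict (Set.Ico 0 (2 * π)))

/-- If `X₁, X₂` are independent and uniform on the unit circle and `a₁, a₂ ≠ 0`, then the
law of `a₁X₁ + a₂X₂` is absolutely continuous with respect to Lebesgue measure on `ℝ² ≅ ℂ`. -/
theorem two_fold_absolutely_continuous
    {Ω : Type*} [MeasurableSpace Ω] (P : Measure Ω) [IsProbabilityMeasure P]
    (X₁ X₂ : Ω → ℂ) (hindep : IndepFun X₁ X₂ P)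
    (h₁ : Measure.map X₁ P = circleUniform)
    (h₂ : Measure.map X₂ P = circleUniform)
    (a₁ a₂ : ℂ) (ha₁ : a₁ ≠ 0) (ha₂ : a₂ ≠ 0) :
    Measure.map (fun ω => a₁ * X₁ ω + a₂ * X₂ ω) P ≪ (volume : Measure ℂ) := by
  set g : ℝ → ℂ := fun θ => Complex.exp (θ * Complex.I) with hg
  set ν : Measure ℝ := (ENNReal.ofReal (2 * π))⁻¹ • volume.restrict (Set.Ico 0 (2 * π)) with hν
  have hgm : Measurable g := by
    apply Continuous.measurable; continuity
  have hcu : circleUniform Set.univ = 1 := by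
    rw [circleUniform, Measure.map_apply hgm MeasurableSet.univ, Set.preimage_univ,
      Measure.smul_apply, Measure.restrict_apply_univ, Real.volume_Ico, smul_eq_mul]
    rw [sub_zero, ENNReal.inv_mul_cancel]
    · exact (ENNReal.ofReal_pos.2 (by positivity)).ne'
    · exact ENNReal.ofReal_ne_top
  have hXm₁ : AEMeasurable X₁ P := by
    by_contra h
    rw [Measure.map_of_not_aemeasurable h] at h₁
    rw [← h₁] at hcu; simp at hcu
  have hXm₂ : AEMeasurable X₂ P := by
    by_contra h
    rw [Measure.map_of_not_aemeasurable h] at h₂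
    rw [← h₂] at hcu; simp at hcu
  have hpair : Measure.map (fun ω => (X₁ ω, X₂ ω)) P = circleUniform.prod circleUniform := by
    rw [show circleUniform.prod circleUniform = (Measure.map X₁ P).prod (Measure.map X₂ P) by
      rw [h₁, h₂]]
    exact (indepFun_iff_map_prod_eq_prod_map_map hXm₁ hXm₂).mp hindep
  set φ : ℂ × ℂ → ℂ := fun p => a₁ * p.1 + a₂ * p.2 with hφ
  have hφm : Measurable φ := by
    apply Continuous.measurable; continuity
  have h3 : Measure.map (fun ω => a₁ * X₁ ω + a₂ * X₂ ω) P
      = Measure.map φ (circleUniform.prod circleUniform) := by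
    rw [← hpair, AEMeasurable.map_map_of_aemeasurable hφm.aemeasurable (hXm₁.prodMk hXm₂)]
    rfl
  rw [h3]
  have hcprod : circleUniform.prod circleUniform = Measure.map (Prod.map g g) (ν.prod ν) := by
    rw [circleUniform]
    exact Measure.map_prod_map ν ν hgm hgm
  rw [hcprod, Measure.map_map hφm (hgm.prodMap hgm)]
  set F : ℝ × ℝ → ℂ := fun p => a₁ * g p.1 + a₂ * g p.2 with hF
  have hFc : (φ ∘ Prod.map g g) = F := rfl
  rw [hFc]
  have hFm : Measurable F := hφm.comp (hgm.prodMap hgm)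
  have hνac : ν ≪ (volume : Measure ℝ) :=
    Measure.smul_absolutelyContinuous.trans
      (Measure.absolutelyContinuous_of_le Measure.restrict_le_self)
  have hprodac : ν.prod ν ≪ (volume : Measure (ℝ × ℝ)) := by
    rw [Measure.volume_eq_prod]
    exact hνac.prod hνac
  refine (hprodac.map hFm).trans ?_
  have hvol : (volume : Measure (ℝ × ℝ)) = Measure.map Complex.measurableEquivRealProd volume :=
    (Complex.volume_preserving_equiv_real_prod.map_eq).symm
  rw [hvol, Measure.map_map hFm Complex.measurableEquivRealProd.measurable]
  have hFe : (F ∘ Complex.measurableEquivRealProd)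
      = fun z : ℂ => a₁ * Complex.exp (z.re * Complex.I)
        + a₂ * Complex.exp (z.im * Complex.I) := rfl
  rw [hFe]
  set w := (starRingEnd ℂ) a₁ * a₂ with hw
  have hw0 : w ≠ 0 := mul_ne_zero (by simpa using ha₁) ha₂
  have habs : ‖w‖ ≠ 0 := norm_ne_zero_iff.mpr hw0
  have hdeq : (fun z : ℂ => (Fd a₁ a₂ z).det)
      = fun z : ℂ => ‖w‖ * Real.sin (w.arg + (z.im - z.re)) :=
    funext (det_Fd a₁ a₂)
  have hdet : Measurable fun z : ℂ => (Fd a₁ a₂ z).det := by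
    rw [hdeq]
    exact (continuous_const.mul (Real.continuous_sin.comp
      (continuous_const.add (Complex.continuous_im.sub Complex.continuous_re)))).measurable
  have hzc : {x : ℝ | Real.sin x = 0}.Countable := by
    have hrange : {x : ℝ | Real.sin x = 0} = Set.range (fun n : ℤ => (n : ℝ) * π) := by
      ext x
      simp only [Set.mem_setOf_eq, Real.sin_eq_zero_iff, Set.mem_range]
    rw [hrange]
    exact Set.countable_range _
  set S : Set ℝ := {t : ℝ | Real.sin (w.arg + t) = 0} with hS
  have hSc : S.Countable := by
    have : S = (fun x => x - w.arg) '' {x : ℝ | Real.sin x = 0} := by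
      ext t
      constructor
      · intro ht; exact ⟨w.arg + t, ht, by ring⟩
      · rintro ⟨x, hx, rfl⟩
        show Real.sin (w.arg + (x - w.arg)) = 0
        rw [show w.arg + (x - w.arg) = x by ring]
        exact hx
    rw [this]
    exact hzc.image _
  have hZ : volume {z : ℂ | (Fd a₁ a₂ z).det = 0} = 0 := by
    have hset : {z : ℂ | (Fd a₁ a₂ z).det = 0} = {z : ℂ | z.im - z.re ∈ S} := by
      ext z
      simp only [Set.mem_setOf_eq, det_Fd, hS, ← hw, mul_eq_zero]
      constructor
      · rintro (h | h)
        · exact absurd h habs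
        · exact h
      · exact Or.inr
    rw [hset]
    exact countable_diag_null hSc
  exact map_volume_ac _ (Fd a₁ a₂) (hasStrictFDerivAt_Fd a₁ a₂) hdet hZ
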